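/- arXiv:1607.03014 — 4 statements merged into one kernel-verified Lean document; each statement's English description precedes it below -/
import Mathlib

section
/- Let K be a strictly convex body in ℝ², and for each unit vector u write F(K,u) = {x_K(u)} and define the middle point m_K(u) = (x_K(u) + x_K(-u))/2. If (K_i) is a sequence of strictly convex bodies converging to K in the Hausdorff metric, then the middle hedgehogs M_{K_i} := {m_{K_i}(u) : u ∈ S¹} converge to M_K := {m_K(u) : u ∈ S¹} in the Hausdorff metric. -/
open Filter Metric


/-- The face of `K` in direction `v`. -/
def face (K : Set (EuclideanSpace ℝ (Fin 2))) (v : EuclideanSpace ℝ (Fin 2)) :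
    Set (EuclideanSpace ℝ (Fin 2)) :=
  {x | x ∈ K ∧ ∀ y ∈ K, (inner ℝ y v : ℝ) ≤ inner ℝ x v}

/-- The middle hedgehog of `K`: midpoints `(x_K(u) + x_K(-u))/2` over unit vectors `u`,
where the faces are singletons. -/
def middleHedgehog (K : Set (EuclideanSpace ℝ (Fin 2))) : Set (EuclideanSpace ℝ (Fin 2)) :=
  {m | ∃ u x y : EuclideanSpace ℝ (Fin 2), ‖u‖ = 1 ∧
    face K u = {x} ∧ face K (-u) = {y} ∧ m = (2⁻¹ : ℝ) • (x + y)}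

private lemma inner_le_add_dist (a b u : EuclideanSpace ℝ (Fin 2)) (hu : ‖u‖ = 1) :
    (inner ℝ a u : ℝ) ≤ inner ℝ b u + dist a b := by
  have h1 : (inner ℝ (a - b) u : ℝ) ≤ ‖a - b‖ * ‖u‖ := real_inner_le_norm _ _
  rw [inner_sub_left, hu, mul_one] at h1
  rw [dist_eq_norm]
  linarith

private lemma key (K : Set (EuclideanSpace ℝ (Fin 2))) (hcpt : IsCompact K)
    (hstrict : ∀ v : EuclideanSpace ℝ (Fin 2), ‖v‖ = 1 → ∃ x, face K v = {x}) :
    ∀ ε : ℝ, 0 < ε → ∃ δ : ℝ, 0 < δ ∧ ∀ u : EuclideanSpace ℝ (Fin 2), ‖u‖ = 1 →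
      ∀ y ∈ K, ∀ z ∈ K,
      (∀ w ∈ K, (inner ℝ w u : ℝ) ≤ inner ℝ y u + δ) →
      (∀ w ∈ K, (inner ℝ w u : ℝ) ≤ inner ℝ z u + δ) → dist y z ≤ ε := by
  intro ε hε
  by_contra hcon
  push_neg at hcon
  have H : ∀ n : ℕ, ∃ u : EuclideanSpace ℝ (Fin 2), ‖u‖ = 1 ∧ ∃ y ∈ K, ∃ z ∈ K,
      (∀ w ∈ K, (inner ℝ w u : ℝ) ≤ inner ℝ y u + 1/((n:ℝ)+1)) ∧
      (∀ w ∈ K, (inner ℝ w u : ℝ) ≤ inner ℝ z u + 1/((n:ℝ)+1)) ∧ ε < dist y z := by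
    intro n
    exact hcon (1/((n:ℝ)+1)) (by positivity)
  choose u hu y hy z hz h1 h2 h3 using H
  have hS : IsCompact ((Metric.sphere (0:EuclideanSpace ℝ (Fin 2)) 1) ×ˢ (K ×ˢ K)) :=
    (isCompact_sphere 0 1).prod (hcpt.prod hcpt)
  have hmem : ∀ n, (u n, y n, z n) ∈
      (Metric.sphere (0:EuclideanSpace ℝ (Fin 2)) 1) ×ˢ (K ×ˢ K) :=
    fun n => ⟨mem_sphere_zero_iff_norm.mpr (hu n), hy n, hz n⟩
  obtain ⟨⟨u0, y0, z0⟩, hmem0, φ, hφ, hconv⟩ := hS.tendsto_subseq hmem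
  have hu0 : Tendsto (fun n => u (φ n)) atTop (nhds u0) :=
    (continuous_fst.tendsto _).comp hconv
  have hy0 : Tendsto (fun n => y (φ n)) atTop (nhds y0) :=
    ((continuous_fst.comp continuous_snd).tendsto _).comp hconv
  have hz0 : Tendsto (fun n => z (φ n)) atTop (nhds z0) :=
    ((continuous_snd.comp continuous_snd).tendsto _).comp hconv
  have hδ0 : Tendsto (fun n : ℕ => 1/((φ n : ℝ)+1)) atTop (nhds 0) :=
    tendsto_one_div_add_atTop_nhds_zero_nat.comp hφ.tendsto_atTop
  have hface : ∀ (p : ℕ → EuclideanSpace ℝ (Fin 2)) (p0 : EuclideanSpace ℝ (Fin 2)),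
      Tendsto (fun n => p (φ n)) atTop (nhds p0) →
      (∀ n, ∀ w ∈ K, (inner ℝ w (u n) : ℝ) ≤ inner ℝ (p n) (u n) + 1/((n:ℝ)+1)) →
      ∀ w ∈ K, (inner ℝ w u0 : ℝ) ≤ inner ℝ p0 u0 := by
    intro p p0 hp hn w hw
    have hA : Tendsto (fun n => (inner ℝ w (u (φ n)) : ℝ)) atTop (nhds (inner ℝ w u0)) :=
      Filter.Tendsto.inner tendsto_const_nhds hu0
    have hB : Tendsto (fun n => (inner ℝ (p (φ n)) (u (φ n)) : ℝ) + 1/((φ n : ℝ)+1))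
        atTop (nhds ((inner ℝ p0 u0 : ℝ) + 0)) :=
      (Filter.Tendsto.inner hp hu0).add hδ0
    rw [add_zero] at hB
    exact le_of_tendsto_of_tendsto' hA hB (fun n => hn (φ n) w hw)
  have hnu0 : ‖u0‖ = 1 := mem_sphere_zero_iff_norm.mp hmem0.1
  obtain ⟨x0, hx0⟩ := hstrict u0 hnu0
  have hy0x : y0 = x0 := by
    have : y0 ∈ face K u0 := ⟨hmem0.2.1, hface y y0 hy0 h1⟩
    rwa [hx0, Set.mem_singleton_iff] at this
  have hz0x : z0 = x0 := by
    have : z0 ∈ face K u0 := ⟨hmem0.2.2, hface z z0 hz0 h2⟩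
    rwa [hx0, Set.mem_singleton_iff] at this
  have hdist : Tendsto (fun n => dist (y (φ n)) (z (φ n))) atTop (nhds (dist y0 z0)) :=
    hy0.dist hz0
  have hεle : ε ≤ dist y0 z0 :=
    le_of_tendsto_of_tendsto' tendsto_const_nhds hdist (fun n => (h3 (φ n)).le)
  rw [hy0x, hz0x, dist_self] at hεle
  linarith

/-- If strictly convex bodies `K_i` converge to a strictly convex body `K` in the Hausdorff
metric, then their middle hedgehogs converge in the Hausdorff metric. -/
theorem middleHedgehog_continuous
    (K : Set (EuclideanSpace ℝ (Fin 2)))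
    (hne : K.Nonempty) (hcpt : IsCompact K) (hconv : Convex ℝ K)
    (hint : (interior K).Nonempty)
    (hstrict : ∀ v : EuclideanSpace ℝ (Fin 2), ‖v‖ = 1 → ∃ x, face K v = {x})
    (Ki : ℕ → Set (EuclideanSpace ℝ (Fin 2)))
    (hKi : ∀ i, (Ki i).Nonempty ∧ IsCompact (Ki i) ∧ Convex ℝ (Ki i) ∧
      (interior (Ki i)).Nonempty ∧
      ∀ v : EuclideanSpace ℝ (Fin 2), ‖v‖ = 1 → ∃ x, face (Ki i) v = {x})
    (hlim : Filter.Tendsto (fun i => Metric.hausdorffDist (Ki i) K)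
      Filter.atTop (nhds 0)) :
    Filter.Tendsto (fun i => Metric.hausdorffDist (middleHedgehog (Ki i)) (middleHedgehog K))
      Filter.atTop (nhds 0) := by
  rw [Metric.tendsto_nhds]
  intro ε hε
  obtain ⟨δ, hδpos, hkey⟩ := key K hcpt hstrict (ε/4) (by linarith)
  set δ' := min (δ/2) (ε/4) with hδ'def
  have hδ'pos : 0 < δ' := lt_min (by linarith) (by linarith)
  have h2δ' : δ' + δ' ≤ δ := by
    have := min_le_left (δ/2) (ε/4); simp only [← hδ'def] at this ⊢; linarith
  have hδ'ε : δ' ≤ ε/4 := min_le_right _ _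
  have hev : ∀ᶠ i in Filter.atTop, Metric.hausdorffDist (Ki i) K < δ' := by
    filter_upwards [Metric.tendsto_nhds.mp hlim δ' hδ'pos] with i hi
    rw [Real.dist_eq, sub_zero, abs_of_nonneg Metric.hausdorffDist_nonneg] at hi
    exact hi
  filter_upwards [hev] with i hi
  obtain ⟨hne_i, hcpt_i, hconv_i, hint_i, hstrict_i⟩ := hKi i
  have hfin : EMetric.hausdorffEdist (Ki i) K ≠ ⊤ :=
    Metric.hausdorffEdist_ne_top_of_nonempty_of_bounded hne_i hne hcpt_i.isBounded
      hcpt.isBounded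
  have core : ∀ u : EuclideanSpace ℝ (Fin 2), ‖u‖ = 1 →
      ∀ xi x : EuclideanSpace ℝ (Fin 2), face (Ki i) u = {xi} → face K u = {x} →
      dist xi x ≤ δ' + ε/4 := by
    intro u hu xi x hxi hx
    have hxiK : xi ∈ face (Ki i) u := by rw [hxi]; exact Set.mem_singleton _
    have hxK : x ∈ face K u := by rw [hx]; exact Set.mem_singleton _
    obtain ⟨x', hx'K, hx'd⟩ := hcpt.exists_infDist_eq_dist hne xi
    have hdxx' : dist xi x' ≤ δ' := by
      rw [← hx'd]
      exact (Metric.infDist_le_hausdorffDist_of_mem hxiK.1 hfin).trans hi.le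
    have hmax' : ∀ w ∈ K, (inner ℝ w u : ℝ) ≤ inner ℝ x' u + δ := by
      intro w hw
      obtain ⟨wi, hwiK, hwid⟩ := hcpt_i.exists_infDist_eq_dist hne_i w
      have hdw : dist w wi ≤ δ' := by
        rw [← hwid]
        refine (Metric.infDist_le_hausdorffDist_of_mem hw ?_).trans ?_
        · rwa [EMetric.hausdorffEdist_comm]
        · rw [Metric.hausdorffDist_comm]; exact hi.le
      have e1 : (inner ℝ w u : ℝ) ≤ inner ℝ wi u + δ' :=
        (inner_le_add_dist w wi u hu).trans (by linarith)
      have e2 : (inner ℝ wi u : ℝ) ≤ inner ℝ xi u := hxiK.2 wi hwiK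
      have e3 : (inner ℝ xi u : ℝ) ≤ inner ℝ x' u + δ' :=
        (inner_le_add_dist xi x' u hu).trans (by linarith)
      linarith
    have hmaxx : ∀ w ∈ K, (inner ℝ w u : ℝ) ≤ inner ℝ x u + δ := fun w hw =>
      (hxK.2 w hw).trans (by linarith)
    have hclose : dist x' x ≤ ε/4 := hkey u hu x' hx'K x hxK.1 hmax' hmaxx
    calc dist xi x ≤ dist xi x' + dist x' x := dist_triangle _ _ _
      _ ≤ δ' + ε/4 := add_le_add hdxx' hclose
  have midbound : ∀ xi yi x y : EuclideanSpace ℝ (Fin 2), dist xi x ≤ δ' + ε/4 →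
      dist yi y ≤ δ' + ε/4 →
      dist ((2⁻¹:ℝ) • (xi + yi)) ((2⁻¹:ℝ) • (x + y)) ≤ δ' + ε/4 := by
    intro xi yi x y h1 h2
    calc dist ((2⁻¹:ℝ) • (xi + yi)) ((2⁻¹:ℝ) • (x + y))
        = ‖(2⁻¹:ℝ)‖ * dist (xi + yi) (x + y) := dist_smul₀ _ _ _
      _ ≤ 2⁻¹ * (dist xi x + dist yi y) := by
          rw [norm_inv, Real.norm_ofNat]
          exact mul_le_mul_of_nonneg_left (dist_add_add_le _ _ _ _) (by norm_num)
      _ ≤ δ' + ε/4 := by linarith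
  have hbound : Metric.hausdorffDist (middleHedgehog (Ki i)) (middleHedgehog K)
      ≤ δ' + ε/4 := by
    apply Metric.hausdorffDist_le_of_mem_dist (by positivity)
    · rintro m ⟨u, xi, yi, hu, hxi, hyi, rfl⟩
      have hnu : ‖-u‖ = 1 := by rw [norm_neg]; exact hu
      obtain ⟨x, hx⟩ := hstrict u hu
      obtain ⟨y, hy⟩ := hstrict (-u) hnu
      exact ⟨(2⁻¹:ℝ) • (x + y), ⟨u, x, y, hu, hx, hy, rfl⟩,
        midbound xi yi x y (core u hu xi x hxi hx) (core (-u) hnu yi y hyi hy)⟩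
    · rintro m ⟨u, x, y, hu, hx, hy, rfl⟩
      have hnu : ‖-u‖ = 1 := by rw [norm_neg]; exact hu
      obtain ⟨xi, hxi⟩ := hstrict_i u hu
      obtain ⟨yi, hyi⟩ := hstrict_i (-u) hnu
      refine ⟨(2⁻¹:ℝ) • (xi + yi), ⟨u, xi, yi, hu, hxi, hyi, rfl⟩, ?_⟩
      rw [dist_comm]
      exact midbound xi yi x y (core u hu xi x hxi hx) (core (-u) hnu yi y hyi hy)
  rw [Real.dist_eq, sub_zero, abs_of_nonneg Metric.hausdorffDist_nonneg]
  linarith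
end

section
/- Let K be a strictly convex body in ℝ². Its middle hedgehog M_K = {m_K(u) : u ∈ S¹} is a single point if and only if K is centrally symmetric (i.e. there exists z with K - z = z - K). -/
/-- The middle hedgehog of a strictly convex body is a single point
iff the body is centrally symmetric. -/
theorem middleHedgehog_singleton_iff_centrallySymmetric
    (K : Set (EuclideanSpace ℝ (Fin 2)))
    (hne : K.Nonempty) (hcpt : IsCompact K) (hconv : Convex ℝ K)
    (hint : (interior K).Nonempty)
    (hstrict : ∀ v : EuclideanSpace ℝ (Fin 2), ‖v‖ = 1 → ∃ x, face K v = {x}) :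
    (∃ p, middleHedgehog K = {p}) ↔
      (∃ z : EuclideanSpace ℝ (Fin 2),
        (fun x => x - z) '' K = (fun x => z - x) '' K) := by
  constructor
  · rintro ⟨p, hp⟩
    -- K is closed under reflection about p
    have key : ∀ k ∈ K, (2:ℝ) • p - k ∈ K := by
      intro k hk
      by_contra hw
      obtain ⟨f, u0, hfa, hu0⟩ := geometric_hahn_banach_closed_point hconv hcpt.isClosed hw
      have hf : ∀ a ∈ K, f a < f ((2:ℝ) • p - k) := fun a ha => (hfa a ha).trans hu0
      set v' := (InnerProductSpace.toDual ℝ (EuclideanSpace ℝ (Fin 2))).symm f with hv'def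
      have hinner : ∀ x : EuclideanSpace ℝ (Fin 2), (inner ℝ v' x : ℝ) = f x := fun x =>
        InnerProductSpace.toDual_symm_apply
      have hv'ne : v' ≠ 0 := by
        intro h
        have h2 := hf k hk
        rw [← hinner, ← hinner, h] at h2
        simp at h2
      have hcpos : (0:ℝ) < ‖v'‖⁻¹ := by
        have := norm_pos_iff.mpr hv'ne
        positivity
      set v : EuclideanSpace ℝ (Fin 2) := ‖v'‖⁻¹ • v' with hvdef
      have hvnorm : ‖v‖ = 1 := by
        rw [hvdef, norm_smul, Real.norm_eq_abs, abs_of_pos hcpos]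
        exact inv_mul_cancel₀ (norm_ne_zero_iff.mpr hv'ne)
      obtain ⟨x, hx⟩ := hstrict v hvnorm
      obtain ⟨y, hy⟩ := hstrict (-v) (by rw [norm_neg]; exact hvnorm)
      have hm : (2⁻¹:ℝ) • (x + y) ∈ middleHedgehog K := ⟨v, x, y, hvnorm, hx, hy, rfl⟩
      rw [hp] at hm
      have hxy : x + y = (2:ℝ) • p := by
        have h2 : (2⁻¹:ℝ) • (x + y) = p := hm
        calc x + y = (2:ℝ) • ((2⁻¹:ℝ) • (x + y)) := by rw [smul_smul]; norm_num
          _ = (2:ℝ) • p := by rw [h2]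
      have hxmem : x ∈ face K v := by rw [hx]; exact rfl
      have hymem : y ∈ face K (-v) := by rw [hy]; exact rfl
      obtain ⟨hxK, hxmax⟩ := hxmem
      obtain ⟨hyK, hymax⟩ := hymem
      -- translate f-inequalities to inner with v
      have hIv : ∀ a : EuclideanSpace ℝ (Fin 2), (inner ℝ a v : ℝ) = ‖v'‖⁻¹ * f a := by
        intro a
        rw [hvdef, real_inner_smul_right, real_inner_comm, hinner]
      have h1 : (inner ℝ x v : ℝ) < inner ℝ ((2:ℝ) • p - k) v := by
        rw [hIv, hIv]
        exact mul_lt_mul_of_pos_left (hf x hxK) hcpos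
      have hyk : (inner ℝ y v : ℝ) ≤ inner ℝ k v := by
        have h3 := hymax k hk
        rw [inner_neg_right, inner_neg_right] at h3
        linarith
      have h2 : (inner ℝ ((2:ℝ) • p - k) v : ℝ) ≤ inner ℝ x v := by
        have he : (inner ℝ ((2:ℝ) • p - k) v : ℝ) = inner ℝ x v + inner ℝ y v - inner ℝ k v := by
          rw [← hxy, inner_sub_left, inner_add_left]
        rw [he]
        linarith
      linarith
    refine ⟨p, ?_⟩
    ext a
    constructor
    · rintro ⟨k, hk, rfl⟩
      refine ⟨(2:ℝ) • p - k, key k hk, ?_⟩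
      simp only [two_smul]
      abel
    · rintro ⟨k, hk, rfl⟩
      refine ⟨(2:ℝ) • p - k, key k hk, ?_⟩
      simp only [two_smul]
      abel
  · rintro ⟨z, hz⟩
    have key : ∀ k ∈ K, (2:ℝ) • z - k ∈ K := by
      intro k hk
      have h1 : k - z ∈ (fun x => x - z) '' K := ⟨k, hk, rfl⟩
      rw [hz] at h1
      obtain ⟨k', hk', hk'eq⟩ := h1
      have h2 : (2:ℝ) • z - k = k' := by
        have h3 : z - k' = k - z := hk'eq
        have : k' = z - (k - z) := by rw [← h3]; abel
        rw [this, two_smul]; abel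
      rwa [h2]
    have refl_face : ∀ u x : EuclideanSpace ℝ (Fin 2), face K u = {x} →
        ((2:ℝ) • z - x) ∈ face K (-u) := by
      intro u x hx
      have hxmem : x ∈ face K u := by rw [hx]; exact rfl
      obtain ⟨hxK, hxmax⟩ := hxmem
      refine ⟨key x hxK, ?_⟩
      intro y hyK
      have h4 := hxmax ((2:ℝ) • z - y) (key y hyK)
      rw [inner_sub_left] at h4
      rw [inner_neg_right, inner_neg_right, inner_sub_left]
      linarith
    have half : ∀ u x y : EuclideanSpace ℝ (Fin 2), face K u = {x} → face K (-u) = {y} →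
        (2⁻¹:ℝ) • (x + y) = z := by
      intro u x y hx hy
      have h5 : (2:ℝ) • z - x ∈ ({y} : Set (EuclideanSpace ℝ (Fin 2))) := by
        rw [← hy]; exact refl_face u x hx
      have h6 : (2:ℝ) • z - x = y := h5
      rw [← h6, two_smul]
      rw [show x + (z + z - x) = (2:ℝ) • z by rw [two_smul]; abel]
      rw [smul_smul]; norm_num
    refine ⟨z, ?_⟩
    rw [Set.eq_singleton_iff_unique_mem]
    constructor
    · set u0 : EuclideanSpace ℝ (Fin 2) := EuclideanSpace.single 0 (1:ℝ) with hu0def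
      have hu0 : ‖u0‖ = 1 := by
        rw [hu0def, EuclideanSpace.norm_single]; norm_num
      obtain ⟨x, hx⟩ := hstrict u0 hu0
      obtain ⟨y, hy⟩ := hstrict (-u0) (by rw [norm_neg]; exact hu0)
      exact ⟨u0, x, y, hu0, hx, hy, (half u0 x y hx hy).symm⟩
    · rintro m ⟨u, x, y, hu, hx, hy, rfl⟩
      exact half u x y hx hy
end

section
/- The set of strictly convex bodies in ℝ² is a dense G_δ subset of the space of convex bodies in ℝ² equipped with the Hausdorff metric; in particular, a typical (Baire-generic) convex body in the plane is strictly convex. -/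
open Metric Set Filter Topology RealInnerProductSpace

noncomputable abbrev EE := EuclideanSpace ℝ (Fin 2)

/-- Inner-product characterization of nearest points in a convex set. -/
lemma nearest_inner_nonpos {L : Set EE} (hL : Convex ℝ L) {z w : EE}
    (hw : w ∈ L) (hmin : ∀ p ∈ L, dist z w ≤ dist z p) {p : EE} (hp : p ∈ L) :
    ⟪z - w, p - w⟫ ≤ 0 := by
  by_contra h
  push_neg at h
  set c : ℝ := ⟪z - w, p - w⟫ with hc
  have hpw : (0:ℝ) < ‖p - w‖ := by
    rcases eq_or_ne p w with rfl | hne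
    · simp [hc] at h
    · exact norm_pos_iff.2 (sub_ne_zero.2 hne)
  set t : ℝ := min 1 (c / ‖p - w‖ ^ 2) with ht
  have ht0 : 0 < t := lt_min one_pos (div_pos h (by positivity))
  have ht1 : t ≤ 1 := min_le_left _ _
  have hq : w + t • (p - w) ∈ L := by
    have := hL hw hp (by linarith : (0:ℝ) ≤ 1 - t) ht0.le (by ring)
    convert this using 1
    rw [smul_sub]
    module
  have hd := hmin _ hq
  have hzq : z - (w + t • (p - w)) = (z - w) - t • (p - w) := by abel
  have expand : ‖(z - w) - t • (p - w)‖ ^ 2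
      = ‖z - w‖ ^ 2 - 2 * t * c + t ^ 2 * ‖p - w‖ ^ 2 := by
    rw [norm_sub_sq_real, real_inner_smul_right, norm_smul, Real.norm_eq_abs, mul_pow, sq_abs]
    ring
  have hle : t * ‖p - w‖ ^ 2 ≤ c := by
    have h2 := min_le_right 1 (c / ‖p - w‖ ^ 2)
    calc t * ‖p - w‖ ^ 2 ≤ (c / ‖p - w‖ ^ 2) * ‖p - w‖ ^ 2 := by
          apply mul_le_mul_of_nonneg_right h2 (by positivity)
      _ = c := by field_simp
  have hdd : ‖z - w‖ ≤ ‖(z - w) - t • (p - w)‖ := by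
    rw [dist_eq_norm, dist_eq_norm, hzq] at hd
    exact hd
  nlinarith [norm_nonneg (z - w), norm_nonneg ((z - w) - t • (p - w)), sq_nonneg t]

/-- If a ball around `z` lies within `δ` of the closed convex set `L`, with `δ` smaller
than the radius, then `z ∈ L`. -/
lemma mem_of_infDist_ball_le {L : Set EE} (hL : Convex ℝ L) (hLc : IsCompact L)
    (hne : L.Nonempty) {z : EE} {s δ : ℝ} (hδ0 : 0 ≤ δ) (hδs : δ < s)
    (h : ∀ w : EE, dist w z ≤ s → infDist w L ≤ δ) : z ∈ L := by
  by_contra hz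
  have hs0 : 0 < s := lt_of_le_of_lt hδ0 hδs
  obtain ⟨w, hwL, hwd⟩ := hLc.exists_infDist_eq_dist hne z
  have hmin : ∀ p ∈ L, dist z w ≤ dist z p := fun p hp => by
    rw [← hwd]; exact infDist_le_dist_of_mem hp
  have hzw : z ≠ w := fun hzw => hz (hzw ▸ hwL)
  have hd0 : (0:ℝ) < ‖z - w‖ := norm_pos_iff.2 (sub_ne_zero.2 hzw)
  set d : ℝ := ‖z - w‖ with hdd
  set u : EE := ‖z - w‖⁻¹ • (z - w) with hu
  have hu1 : ‖u‖ = 1 := by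
    rw [hu, norm_smul, norm_inv, norm_norm, inv_mul_cancel₀ hd0.ne']
  set q : EE := z + s • u with hqdef
  have hq : dist q z ≤ s := by
    rw [hqdef, dist_eq_norm, add_sub_cancel_left, norm_smul, hu1, mul_one,
      Real.norm_eq_abs, abs_of_pos hs0]
  have h2 := h q hq
  have hlow : ∀ p ∈ L, s < dist q p := by
    intro p hp
    have hinner := nearest_inner_nonpos hL hwL hmin hp
    have hqp : q - p = (z - w) + s • u + (w - p) := by rw [hqdef]; abel
    have e1 : ⟪z - w, u⟫ = d := by
      rw [hu, real_inner_smul_right, real_inner_self_eq_norm_sq, ← hdd]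
      field_simp
    have e2 : ⟪u, u⟫ = 1 := by
      rw [real_inner_self_eq_norm_sq, hu1, one_pow]
    have e3 : ⟪w - p, u⟫ = -(‖z - w‖⁻¹ * ⟪z - w, p - w⟫) := by
      rw [hu, real_inner_smul_right, real_inner_comm]
      rw [show w - p = -(p - w) by abel, inner_neg_right]
      ring
    have key : ⟪q - p, u⟫ = d + s - ‖z - w‖⁻¹ * ⟪z - w, p - w⟫ := by
      rw [hqp, inner_add_left, inner_add_left, e1, e3, real_inner_smul_left, e2]
      ring
    have hcs : ⟪q - p, u⟫ ≤ ‖q - p‖ := by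
      calc ⟪q - p, u⟫ ≤ ‖q - p‖ * ‖u‖ := real_inner_le_norm _ _
        _ = ‖q - p‖ := by rw [hu1, mul_one]
    have hnn : 0 ≤ -(‖z - w‖⁻¹ * ⟪z - w, p - w⟫) := by
      have : 0 ≤ ‖z - w‖⁻¹ := by positivity
      nlinarith
    rw [dist_eq_norm]
    nlinarith [hcs, key]
  have : infDist q L < s := lt_of_le_of_lt h2 hδs
  obtain ⟨p, hp, hdp⟩ := (infDist_lt_iff hne).1 this
  exact absurd hdp (not_lt.2 (hlow p hp).le)

/-- Interior-ball stability under Hausdorff proximity. -/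
lemma closedBall_subset_of_near {K L : Set EE} (hLconv : Convex ℝ L) (hLcomp : IsCompact L)
    (hLne : L.Nonempty) {m : EE} {r δ : ℝ} (hδ0 : 0 ≤ δ) (hδr : δ < r)
    (hball : closedBall m (2 * r) ⊆ K) (hKL : ∀ x ∈ K, infDist x L ≤ δ) :
    closedBall m r ⊆ L := by
  intro p hp
  refine mem_of_infDist_ball_le hLconv hLcomp hLne hδ0 hδr (fun w hw => hKL w (hball ?_))
  rw [mem_closedBall] at *
  calc dist w m ≤ dist w p + dist p m := dist_triangle _ _ _
    _ ≤ 2 * r := by linarith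

/-- Parallelogram-type identity for convex combinations. -/
lemma combo_norm_sq' (u v : EE) {a b : ℝ} (hab : a + b = 1) :
    ‖a • u + b • v‖ ^ 2 = a * ‖u‖ ^ 2 + b * ‖v‖ ^ 2 - a * b * ‖u - v‖ ^ 2 := by
  rw [norm_add_sq_real, norm_sub_sq_real, norm_smul, norm_smul,
    real_inner_smul_left, real_inner_smul_right, Real.norm_eq_abs, Real.norm_eq_abs,
    mul_pow, mul_pow, sq_abs, sq_abs]
  linear_combination (a * ‖u‖ ^ 2 + b * ‖v‖ ^ 2) * hab

/-- Parallelogram-type identity for convex combinations. -/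
lemma combo_norm_sq (x y c : EE) {a b : ℝ} (hab : a + b = 1) :
    ‖a • x + b • y - c‖ ^ 2
      = a * ‖x - c‖ ^ 2 + b * ‖y - c‖ ^ 2 - a * b * ‖x - y‖ ^ 2 := by
  have h1 : a • x + b • y - c = a • (x - c) + b • (y - c) := by
    have hc : c = a • c + b • c := by rw [← add_smul, hab, one_smul]
    rw [smul_sub, smul_sub]
    nth_rewrite 1 [hc]
    abel
  rw [h1, show x - y = (x - c) - (y - c) by abel]
  exact combo_norm_sq' _ _ hab

set_option maxHeartbeats 1000000 in
/-- The ball hull: a strictly convex compact approximation of a convex compact set. -/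
lemma exists_strictConvex_approx {A : Set EE} (hconv : Convex ℝ A) (hcomp : IsCompact A)
    (hne : A.Nonempty) {ε : ℝ} (hε : 0 < ε) :
    ∃ B : Set EE, Convex ℝ B ∧ IsCompact B ∧ A ⊆ B ∧ StrictConvex ℝ B ∧
      ∀ x ∈ B, ∃ y ∈ A, dist x y ≤ ε := by
  obtain ⟨x0, hx0⟩ := hne
  obtain ⟨Rb, hRb⟩ := hcomp.isBounded.subset_closedBall x0
  set D : ℝ := 2 * max Rb 0 with hDdef
  have hD0 : 0 ≤ D := by positivity
  have hD : ∀ z ∈ A, ∀ y ∈ A, ‖z - y‖ ≤ D := by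
    intro z hz y hy
    have h1 : dist z x0 ≤ max Rb 0 := le_trans (hRb hz) (le_max_left _ _)
    have h2 : dist y x0 ≤ max Rb 0 := le_trans (hRb hy) (le_max_left _ _)
    calc ‖z - y‖ = dist z y := (dist_eq_norm _ _).symm
      _ ≤ dist z x0 + dist x0 y := dist_triangle _ _ _
      _ ≤ max Rb 0 + max Rb 0 := by rw [dist_comm x0 y]; linarith
      _ = D := by rw [hDdef]; ring
  set Q : ℝ := (D ^ 2 + ε ^ 2) / (2 * ε) with hQdef
  have hq : 0 ≤ Q := by positivity
  set R : ℝ := D + 1 + Q with hRdef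
  have hRD : D < R := by rw [hRdef]; linarith
  have hR0 : 0 < R := lt_of_le_of_lt hD0 hRD
  have hQε : Q * (2 * ε) = D ^ 2 + ε ^ 2 := by rw [hQdef]; field_simp
  have hRε : D ^ 2 + ε ^ 2 < 2 * R * ε := by
    have h1 : 2 * R * ε = 2 * (D + 1) * ε + Q * (2 * ε) := by rw [hRdef]; ring
    have h2 : 0 < 2 * (D + 1) * ε := by positivity
    rw [h1, hQε]; linarith
  have hx0R : A ⊆ closedBall x0 R := fun z hz => by
    rw [mem_closedBall]
    have h2 : dist z x0 ≤ max Rb 0 := le_trans (hRb hz) (le_max_left _ _)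
    have h3 : max Rb 0 ≤ D := by rw [hDdef]; nlinarith [le_max_right Rb 0]
    linarith
  refine ⟨⋂ (c : EE) (_ : A ⊆ closedBall c R), closedBall c R, ?_, ?_, ?_, ?_, ?_⟩
  · exact convex_iInter fun c => convex_iInter fun _ => convex_closedBall c R
  · refine (isCompact_closedBall x0 R).of_isClosed_subset ?_ ?_
    · exact isClosed_iInter fun c => isClosed_iInter fun _ => isClosed_closedBall
    · exact iInter₂_subset x0 hx0R
  · intro z hz
    exact mem_iInter₂.2 fun c hc => hc hz
  · -- strict convexity
    intro x hx y hy hxy a b ha hb hab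
    rw [mem_iInter₂] at hx hy
    have hd : (0:ℝ) < ‖x - y‖ := norm_pos_iff.2 (sub_ne_zero.2 hxy)
    have key : ∀ c : EE, A ⊆ closedBall c R →
        ‖a • x + b • y - c‖ ^ 2 ≤ R ^ 2 - a * b * ‖x - y‖ ^ 2 := by
      intro c hc
      have h1 : ‖x - c‖ ≤ R := by
        have := hx c hc; rw [mem_closedBall, dist_eq_norm] at this; exact this
      have h2 : ‖y - c‖ ≤ R := by
        have := hy c hc; rw [mem_closedBall, dist_eq_norm] at this; exact this
      have hX : ‖x - c‖ ^ 2 ≤ R ^ 2 := by nlinarith [norm_nonneg (x - c)]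
      have hY : ‖y - c‖ ^ 2 ≤ R ^ 2 := by nlinarith [norm_nonneg (y - c)]
      have hX2 := mul_le_mul_of_nonneg_left hX ha.le
      have hY2 := mul_le_mul_of_nonneg_left hY hb.le
      have hid := combo_norm_sq x y c hab
      have hsum : a * R ^ 2 + b * R ^ 2 = R ^ 2 := by
        rw [← add_mul, hab, one_mul]
      linarith
    have habd : a * b * ‖x - y‖ ^ 2 ≤ R ^ 2 := by
      have h := key x0 hx0R
      nlinarith [sq_nonneg ‖a • x + b • y - x0‖]
    have habd0 : 0 < a * b * ‖x - y‖ ^ 2 := by positivity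
    set ρ : ℝ := R - Real.sqrt (R ^ 2 - a * b * ‖x - y‖ ^ 2) with hρdef
    have hρ : 0 < ρ := by
      rw [hρdef, sub_pos, Real.sqrt_lt' hR0]
      linarith
    have hsub : Metric.ball (a • x + b • y) ρ ⊆
        ⋂ (c : EE) (_ : A ⊆ closedBall c R), closedBall c R := by
      intro q hq
      rw [mem_ball] at hq
      refine mem_iInter₂.2 fun c hc => ?_
      have hpc : dist (a • x + b • y) c ≤ Real.sqrt (R ^ 2 - a * b * ‖x - y‖ ^ 2) := by
        rw [Real.le_sqrt dist_nonneg (by linarith), dist_eq_norm]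
        exact key c hc
      rw [mem_closedBall]
      calc dist q c ≤ dist q (a • x + b • y) + dist (a • x + b • y) c := dist_triangle _ _ _
        _ ≤ ρ + Real.sqrt (R ^ 2 - a * b * ‖x - y‖ ^ 2) := by linarith
        _ = R := by rw [hρdef]; ring
    exact interior_maximal hsub isOpen_ball (mem_ball_self hρ)
  · -- approximation property
    intro x hx
    by_contra hcon
    push_neg at hcon
    obtain ⟨y, hyA, hyd⟩ := hcomp.exists_infDist_eq_dist ⟨x0, hx0⟩ x
    have hmin : ∀ p ∈ A, dist x y ≤ dist x p := fun p hp => by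
      rw [← hyd]; exact infDist_le_dist_of_mem hp
    have hδε : ε < dist x y := hcon y hyA
    set δ : ℝ := ‖x - y‖ with hδdef
    have hδeq : dist x y = δ := dist_eq_norm _ _
    have hδ0 : 0 < δ := lt_trans hε (hδeq ▸ hδε)
    set t : ℝ := Real.sqrt (R ^ 2 - D ^ 2) with htdef
    have ht2 : t ^ 2 = R ^ 2 - D ^ 2 := Real.sq_sqrt (by nlinarith)
    have ht0 : 0 ≤ t := Real.sqrt_nonneg _
    set u : EE := ‖x - y‖⁻¹ • (x - y) with hu
    have hu1 : ‖u‖ = 1 := by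
      rw [hu, norm_smul, norm_inv, norm_norm, inv_mul_cancel₀ hδ0.ne']
    set c : EE := y - t • u with hcdef
    have hcA : A ⊆ closedBall c R := by
      intro z hz
      have hinner : ⟪x - y, z - y⟫ ≤ 0 := nearest_inner_nonpos hconv hyA hmin hz
      have hzy : ‖z - y‖ ≤ D := hD z hz y hyA
      have hzc : z - c = (z - y) + t • u := by rw [hcdef]; abel
      have hiu : ⟪z - y, u⟫ ≤ 0 := by
        rw [hu, real_inner_smul_right, real_inner_comm]
        have h5 : (0:ℝ) ≤ ‖x - y‖⁻¹ := by positivity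
        nlinarith
      have hsq : ‖z - c‖ ^ 2 ≤ R ^ 2 := by
        rw [hzc, norm_add_sq_real, real_inner_smul_right, norm_smul, Real.norm_eq_abs,
          mul_pow, sq_abs, hu1]
        nlinarith [mul_nonneg ht0 (neg_nonneg.2 hiu), norm_nonneg (z - y)]
      rw [mem_closedBall, dist_eq_norm]
      nlinarith [norm_nonneg (z - c)]
    have hxc : dist x c ≤ R := by
      have := (mem_iInter₂.1 hx) c hcA
      rwa [mem_closedBall] at this
    have hxyu : δ • u = x - y := by
      rw [hu, smul_smul, mul_inv_cancel₀ hδ0.ne', one_smul]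
    have hxceq : x - c = (δ + t) • u := by
      rw [hcdef, add_smul, hxyu]; abel
    have hdxc : dist x c = δ + t := by
      rw [dist_eq_norm, hxceq, norm_smul, hu1, mul_one, Real.norm_eq_abs,
        abs_of_pos (by linarith)]
    have hεδ : ε < δ := hδeq ▸ hδε
    have hδR : δ + t ≤ R := by rw [← hdxc]; exact hxc
    have htR : t < R - ε := by linarith
    have hsq2 : t ^ 2 < (R - ε) ^ 2 := by nlinarith
    nlinarith [hsq2, ht2, hRε]

/-- The space of planar convex bodies: nonempty compact convex sets with nonempty
interior, with the Hausdorff metric. -/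
def PlanarBody : Type :=
  {K : ConvexBody (EuclideanSpace ℝ (Fin 2)) //
    (interior (K : Set (EuclideanSpace ℝ (Fin 2)))).Nonempty}

noncomputable instance : MetricSpace PlanarBody :=
  Subtype.metricSpace

lemma planar_dist (K L : PlanarBody) :
    dist K L = Metric.hausdorffDist (K.1 : Set EE) (L.1 : Set EE) := by
  show dist K.1 L.1 = _
  rw [← ConvexBody.hausdorffDist_coe]

lemma dense_aux (K : PlanarBody) {ε : ℝ} (hε : 0 < ε) :
    ∃ L : PlanarBody, StrictConvex ℝ (L.1 : Set EE) ∧ dist L K ≤ ε := by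
  obtain ⟨B, hBconv, hBcomp, hAB, hBstrict, happrox⟩ :=
    exists_strictConvex_approx K.1.convex K.1.isCompact K.1.nonempty hε
  refine ⟨⟨⟨B, hBconv, hBcomp, K.1.nonempty.mono hAB⟩, K.2.mono (interior_mono hAB)⟩,
    hBstrict, ?_⟩
  refine (planar_dist _ K).trans_le ?_
  refine hausdorffDist_le_of_mem_dist hε.le happrox fun x hx => ⟨x, hAB hx, by simpa using hε.le⟩

/-- Bodies with a "flat spot" of size at least `1/(n+1)`. -/
def badSet (n : ℕ) : Set PlanarBody :=
  {K | ∃ x y : EE, x ∈ (K.1 : Set EE) ∧ y ∈ (K.1 : Set EE) ∧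
    1 / (n + 1 : ℝ) ≤ dist x y ∧ midpoint ℝ x y ∉ interior (K.1 : Set EE)}

set_option maxHeartbeats 1000000 in
lemma isClosed_badSet (n : ℕ) : IsClosed (badSet n) := by
  apply IsSeqClosed.isClosed
  intro f K hf hlim
  have hdist : Tendsto (fun j => dist (f j) K) atTop (𝓝 0) :=
    tendsto_iff_dist_tendsto_zero.1 hlim
  have hmem : ∀ (L : PlanarBody) (p : EE), p ∈ (L.1 : Set EE) →
      infDist p (K.1 : Set EE) ≤ dist L K := by
    intro L p hp
    rw [planar_dist]
    exact infDist_le_hausdorffDist_of_mem hp ConvexBody.hausdorffEdist_ne_top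
  have hmem2 : ∀ (L : PlanarBody) (p : EE), p ∈ (K.1 : Set EE) →
      infDist p (L.1 : Set EE) ≤ dist L K := by
    intro L p hp
    rw [planar_dist, hausdorffDist_comm]
    exact infDist_le_hausdorffDist_of_mem hp ConvexBody.hausdorffEdist_ne_top
  obtain ⟨k0, hk0⟩ := K.1.nonempty
  obtain ⟨RK, hRK⟩ := K.1.isCompact.isBounded.subset_closedBall k0
  have hC0 : ∀ (L : PlanarBody), dist L K ≤ 1 → ∀ p ∈ (L.1 : Set EE),
      p ∈ closedBall k0 (max RK 0 + 2) := by
    intro L hL p hp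
    have h1 : infDist p (K.1 : Set EE) ≤ 1 := le_trans (hmem L p hp) hL
    obtain ⟨q, hq, hpq⟩ := (infDist_lt_iff K.1.nonempty).1 (lt_of_le_of_lt h1 one_lt_two)
    have h2 : dist q k0 ≤ max RK 0 := le_trans (hRK hq) (le_max_left _ _)
    rw [mem_closedBall]
    calc dist p k0 ≤ dist p q + dist q k0 := dist_triangle _ _ _
      _ ≤ max RK 0 + 2 := by linarith
  obtain ⟨N, hN⟩ := (Metric.tendsto_atTop.1 hdist) 1 one_pos
  set g : ℕ → PlanarBody := fun j => f (j + N) with hgdef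
  have hgbad : ∀ j, g j ∈ badSet n := fun j => hf (j + N)
  have hg1 : ∀ j, dist (g j) K ≤ 1 := by
    intro j
    have := hN (j + N) (Nat.le_add_left N j)
    rw [Real.dist_eq, sub_zero] at this
    exact (le_abs_self _).trans this.le
  have hglim : Tendsto g atTop (𝓝 K) := hlim.comp (tendsto_add_atTop_nat N)
  choose X Y hX hY hXY hm using hgbad
  have hXC : ∀ j, X j ∈ closedBall k0 (max RK 0 + 2) := fun j => hC0 (g j) (hg1 j) _ (hX j)
  have hYC : ∀ j, Y j ∈ closedBall k0 (max RK 0 + 2) := fun j => hC0 (g j) (hg1 j) _ (hY j)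
  obtain ⟨x0, -, φ, hφ, hXφ⟩ := (isCompact_closedBall k0 (max RK 0 + 2)).tendsto_subseq hXC
  obtain ⟨y0, -, ψ, hψ, hYψ⟩ := (isCompact_closedBall k0 (max RK 0 + 2)).tendsto_subseq
    (fun j => hYC (φ j))
  set τ : ℕ → ℕ := φ ∘ ψ with hτdef
  have hXτ : Tendsto (fun j => X (τ j)) atTop (𝓝 x0) := hXφ.comp hψ.tendsto_atTop
  have hYτ : Tendsto (fun j => Y (τ j)) atTop (𝓝 y0) := hYψ
  have hgτ : Tendsto (fun j => g (τ j)) atTop (𝓝 K) :=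
    hglim.comp (hφ.comp hψ).tendsto_atTop
  have hdτ : Tendsto (fun j => dist (g (τ j)) K) atTop (𝓝 0) :=
    tendsto_iff_dist_tendsto_zero.1 hgτ
  have hmemK : ∀ (z0 : EE), Tendsto (fun j : ℕ => (fun w => w) z0) atTop (𝓝 z0) := fun _ => tendsto_const_nhds
  refine ⟨x0, y0, ?_, ?_, ?_, ?_⟩
  · have h1 : Tendsto (fun j => infDist (X (τ j)) (K.1 : Set EE)) atTop
        (𝓝 (infDist x0 (K.1 : Set EE))) :=
      ((continuous_infDist_pt _).tendsto x0).comp hXτ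
    have h2 : infDist x0 (K.1 : Set EE) ≤ 0 :=
      le_of_tendsto_of_tendsto' h1 hdτ (fun j => hmem _ _ (hX (τ j)))
    exact (K.1.isCompact.isClosed.mem_iff_infDist_zero K.1.nonempty).2
      (le_antisymm h2 infDist_nonneg)
  · have h1 : Tendsto (fun j => infDist (Y (τ j)) (K.1 : Set EE)) atTop
        (𝓝 (infDist y0 (K.1 : Set EE))) :=
      ((continuous_infDist_pt _).tendsto y0).comp hYτ
    have h2 : infDist y0 (K.1 : Set EE) ≤ 0 :=
      le_of_tendsto_of_tendsto' h1 hdτ (fun j => hmem _ _ (hY (τ j)))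
    exact (K.1.isCompact.isClosed.mem_iff_infDist_zero K.1.nonempty).2
      (le_antisymm h2 infDist_nonneg)
  · have h1 : Tendsto (fun j => dist (X (τ j)) (Y (τ j))) atTop (𝓝 (dist x0 y0)) :=
      hXτ.dist hYτ
    exact ge_of_tendsto h1 (Filter.Eventually.of_forall fun j => hXY (τ j))
  · intro hmid
    rw [mem_interior_iff_mem_nhds, Metric.mem_nhds_iff] at hmid
    obtain ⟨r, hr, hball⟩ := hmid
    have hmidτ : Tendsto (fun j => midpoint ℝ (X (τ j)) (Y (τ j))) atTop
        (𝓝 (midpoint ℝ x0 y0)) := by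
      simp only [midpoint_eq_smul_add]
      exact (hXτ.add hYτ).const_smul _
    have E1 : ∀ᶠ j in atTop, dist (g (τ j)) K < r / 8 := by
      have := Metric.tendsto_nhds.1 hdτ (r / 8) (by positivity)
      filter_upwards [this] with j hj
      rw [Real.dist_eq, sub_zero] at hj
      exact (le_abs_self _).trans_lt hj
    have E2 : ∀ᶠ j in atTop,
        dist (midpoint ℝ (X (τ j)) (Y (τ j))) (midpoint ℝ x0 y0) < r / 4 :=
      Metric.tendsto_nhds.1 hmidτ (r / 4) (by positivity)
    obtain ⟨j, hj1, hj2⟩ := (E1.and E2).exists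
    set m : EE := midpoint ℝ (X (τ j)) (Y (τ j)) with hmdef
    have hKball : closedBall m (2 * (r / 4)) ⊆ (K.1 : Set EE) := by
      intro w hw
      apply hball
      rw [mem_ball]
      rw [mem_closedBall] at hw
      calc dist w (midpoint ℝ x0 y0) ≤ dist w m + dist m (midpoint ℝ x0 y0) :=
            dist_triangle _ _ _
        _ < 2 * (r / 4) + r / 4 := by linarith
        _ ≤ r := by linarith
    have hsub : closedBall m (r / 4) ⊆ ((g (τ j)).1 : Set EE) :=
      closedBall_subset_of_near (g (τ j)).1.convex (g (τ j)).1.isCompact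
        (g (τ j)).1.nonempty dist_nonneg (by linarith : dist (g (τ j)) K < r / 4)
        hKball (fun x hx => hmem2 _ _ hx)
    have : m ∈ interior ((g (τ j)).1 : Set EE) :=
      interior_maximal (le_trans ball_subset_closedBall hsub) isOpen_ball
        (mem_ball_self (by positivity))
    exact hm (τ j) this

lemma strict_eq_iInter :
    {K : PlanarBody | StrictConvex ℝ (K.1 : Set EE)} = ⋂ n, (badSet n)ᶜ := by
  ext K
  simp only [Set.mem_setOf_eq, Set.mem_iInter, Set.mem_compl_iff]
  constructor
  · intro hs n hbad
    obtain ⟨x, y, hx, hy, hd, hmid⟩ := hbad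
    have hne : x ≠ y := by
      intro h
      rw [h, dist_self] at hd
      have : (0:ℝ) < 1 / (n + 1 : ℝ) := by positivity
      linarith
    have hcombo := hs hx hy hne (a := 1/2) (b := 1/2) one_half_pos one_half_pos (by norm_num)
    apply hmid
    have hmeq : midpoint ℝ x y = (1/2 : ℝ) • x + (1/2 : ℝ) • y := by
      rw [midpoint_eq_smul_add, invOf_eq_inv, smul_add]
      norm_num
    rw [hmeq]
    exact hcombo
  · intro h x hx y hy hne a b ha hb hab
    by_contra hni
    have hmidni : midpoint ℝ x y ∉ interior (K.1 : Set EE) := by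
      intro hmid
      apply hni
      have hb' : b = 1 - a := by linarith
      rcases le_or_gt a (1/2) with hA | hA
      · have h2 : (2*a) • (midpoint ℝ x y) + (1 - 2*a) • y = a • x + b • y := by
          rw [midpoint_eq_smul_add, invOf_eq_inv, hb']
          module
        rw [← h2]
        exact K.1.convex.combo_interior_self_mem_interior hmid hy (by linarith)
          (by linarith) (by ring)
      · have h2 : (2*b) • (midpoint ℝ x y) + (1 - 2*b) • x = a • x + b • y := by
          rw [midpoint_eq_smul_add, invOf_eq_inv, hb']
          module
        rw [← h2]
        exact K.1.convex.combo_interior_self_mem_interior hmid hx (by linarith)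
          (by linarith) (by ring)
    obtain ⟨nn, hn⟩ := exists_nat_one_div_lt (dist_pos.2 hne)
    exact h nn ⟨x, y, hx, hy, hn.le, hmidni⟩

/-- The strictly convex bodies form a dense `Gδ` subset of the space of planar
convex bodies; in particular a typical planar convex body is strictly convex. -/
theorem strictlyConvex_dense_Gdelta :
    IsGδ {K : PlanarBody | StrictConvex ℝ (K.1 : Set (EuclideanSpace ℝ (Fin 2)))} ∧
    Dense {K : PlanarBody | StrictConvex ℝ (K.1 : Set (EuclideanSpace ℝ (Fin 2)))} := by
  constructor
  · rw [strict_eq_iInter]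
    exact IsGδ.iInter_of_isOpen fun n => (isClosed_badSet n).isOpen_compl
  · rw [Metric.dense_iff]
    intro K r hr
    obtain ⟨L, hL, hLd⟩ := dense_aux K (half_pos hr)
    exact ⟨L, mem_ball.2 (lt_of_le_of_lt hLd (half_lt_self hr)), hL⟩
end

section
/- For each k ∈ ℕ, the set A_k of strictly convex bodies K in ℝ² such that the convex hull of the middle hedgehog M_K has at most k exposed points is closed in the space of strictly convex bodies with the Hausdorff metric. -/
open Metric Filter Set
open scoped RealInnerProductSpace Topology

local notation "𝔼" => EuclideanSpace ℝ (Fin 2)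

lemma face_nonempty {A : Set 𝔼} (hc : IsCompact A) (hne : A.Nonempty) (u : 𝔼) :
    ∃ x, x ∈ face A u := by
  have hcont : ContinuousOn (fun y : 𝔼 => (inner ℝ y u : ℝ)) A :=
    (Continuous.inner continuous_id continuous_const).continuousOn
  obtain ⟨x, hx, hmax⟩ := hc.exists_isMaxOn hne hcont
  exact ⟨x, hx, fun y hy => hmax hy⟩

lemma face_subsingleton {A : Set 𝔼} (hA : StrictConvex ℝ A) {u : 𝔼} (hu : u ≠ 0)
    {x₁ x₂ : 𝔼} (h₁ : x₁ ∈ face A u) (h₂ : x₂ ∈ face A u) : x₁ = x₂ := by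
  by_contra hne
  have hc : (inner ℝ x₂ u : ℝ) = inner ℝ x₁ u := le_antisymm (h₁.2 x₂ h₂.1) (h₂.2 x₁ h₁.1)
  have hm : (2⁻¹ : ℝ) • x₁ + (2⁻¹ : ℝ) • x₂ ∈ interior A :=
    hA h₁.1 h₂.1 hne (by norm_num) (by norm_num) (by norm_num)
  obtain ⟨r, hr, hball⟩ := Metric.mem_nhds_iff.1 (mem_interior_iff_mem_nhds.1 hm)
  set m := (2⁻¹ : ℝ) • x₁ + (2⁻¹ : ℝ) • x₂ with hmdef
  have hu' : (0:ℝ) < ‖u‖ := norm_pos_iff.2 hu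
  set p := m + (r / (2 * ‖u‖)) • u with hpdef
  have hpA : p ∈ A := by
    apply hball
    have : dist p m = r / (2 * ‖u‖) * ‖u‖ := by
      rw [hpdef, dist_eq_norm, add_sub_cancel_left, norm_smul]
      have : 0 ≤ r / (2 * ‖u‖) := by positivity
      rw [Real.norm_eq_abs, abs_of_nonneg this]
    have h2 : dist p m = r / 2 := by
      rw [this]; field_simp
    simp only [mem_ball, h2]
    linarith
  have hple : (inner ℝ p u : ℝ) ≤ inner ℝ x₁ u := h₁.2 p hpA
  have hinm : (inner ℝ m u : ℝ) = inner ℝ x₁ u := by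
    rw [hmdef, inner_add_left, real_inner_smul_left, real_inner_smul_left, hc]; ring
  have hinp : (inner ℝ p u : ℝ) = inner ℝ x₁ u + r / (2 * ‖u‖) * ‖u‖ ^ 2 := by
    rw [hpdef, inner_add_left, real_inner_smul_left, real_inner_self_eq_norm_sq, hinm]
  have : (0:ℝ) < r / (2 * ‖u‖) * ‖u‖ ^ 2 := by positivity
  linarith [hple, hinp]

open Classical in
noncomputable def spt (A : Set 𝔼) (u : 𝔼) : 𝔼 :=
  if h : ∃ x, x ∈ face A u then h.choose else 0

lemma spt_mem {A : Set 𝔼} {u : 𝔼} (h : ∃ x, x ∈ face A u) : spt A u ∈ face A u := by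
  classical
  rw [spt]
  rw [dif_pos h]
  exact h.choose_spec

lemma face_eq_singleton {A : Set 𝔼} (hc : IsCompact A) (hne : A.Nonempty)
    (hA : StrictConvex ℝ A) {u : 𝔼} (hu : u ≠ 0) : face A u = {spt A u} := by
  have h := face_nonempty hc hne u
  ext x
  simp only [Set.mem_singleton_iff]
  constructor
  · intro hx; exact face_subsingleton hA hu hx (spt_mem h)
  · rintro rfl; exact spt_mem h

lemma middleHedgehog_eq {A : Set 𝔼} (hc : IsCompact A) (hne : A.Nonempty)
    (hA : StrictConvex ℝ A) :
    middleHedgehog A =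
      (fun u => (2⁻¹ : ℝ) • (spt A u + spt A (-u))) '' sphere (0:𝔼) 1 := by
  ext m
  constructor
  · rintro ⟨u, x, y, hu, hfx, hfy, rfl⟩
    have hu0 : u ≠ 0 := by intro h; rw [h, norm_zero] at hu; norm_num at hu
    have hu0' : -u ≠ 0 := neg_ne_zero.2 hu0
    have hx : x = spt A u := by
      have := face_eq_singleton hc hne hA hu0
      rw [this] at hfx
      exact (Set.singleton_eq_singleton_iff.1 hfx.symm)
    have hy : y = spt A (-u) := by
      have := face_eq_singleton hc hne hA hu0'
      rw [this] at hfy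
      exact (Set.singleton_eq_singleton_iff.1 hfy.symm)
    exact ⟨u, by simpa using hu, by rw [hx, hy]⟩
  · rintro ⟨u, hu, rfl⟩
    have hu1 : ‖u‖ = 1 := by simpa using hu
    have hu0 : u ≠ 0 := by intro h; rw [h, norm_zero] at hu1; norm_num at hu1
    exact ⟨u, spt A u, spt A (-u), hu1,
      face_eq_singleton hc hne hA hu0,
      face_eq_singleton hc hne hA (neg_ne_zero.2 hu0), rfl⟩
lemma supp_tendsto {A : Set 𝔼} (hA : IsCompact A) (hAne : A.Nonempty)
    (hAs : StrictConvex ℝ A) {An : ℕ → Set 𝔼} (hAnc : ∀ n, IsCompact (An n))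
    (hAnne : ∀ n, (An n).Nonempty)
    (hd : Tendsto (fun n => hausdorffDist (An n) A) atTop (𝓝 0))
    {un : ℕ → 𝔼} {u : 𝔼} (hu : u ≠ 0) (hun : Tendsto un atTop (𝓝 u))
    {pn : ℕ → 𝔼} (hpn : ∀ n, pn n ∈ face (An n) (un n))
    {q : 𝔼} (hq : q ∈ face A u) : Tendsto pn atTop (𝓝 q) := by
  have hEd : ∀ n, EMetric.hausdorffEdist (An n) A ≠ ⊤ := fun n =>
    Metric.hausdorffEdist_ne_top_of_nonempty_of_bounded (hAnne n) hAne
      (hAnc n).isBounded hA.isBounded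
  obtain ⟨R, hR⟩ := hA.isBounded.subset_closedBall 0
  -- eventually pn n is in a fixed closed ball
  have hev : ∀ᶠ n in atTop, pn n ∈ closedBall (0:𝔼) (R + 1) := by
    filter_upwards [hd.eventually (gt_mem_nhds one_pos)] with n hn
    have h1 : infDist (pn n) A ≤ hausdorffDist (An n) A :=
      infDist_le_hausdorffDist_of_mem (hpn n).1 (hEd n)
    have h2 : infDist (pn n) A < 1 := lt_of_le_of_lt h1 hn
    obtain ⟨a, haA, hda⟩ := (infDist_lt_iff hAne).1 h2
    have : dist (pn n) 0 ≤ dist (pn n) a + dist a 0 := dist_triangle _ _ _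
    have haR : dist a 0 ≤ R := by simpa [mem_closedBall] using hR haA
    simp only [mem_closedBall]
    linarith
  by_contra hcon
  rw [Metric.tendsto_atTop] at hcon
  push_neg at hcon
  obtain ⟨ε, hε, hfreq⟩ := hcon
  have hfreq' : ∀ N, ∃ n > N, ε ≤ dist (pn n) q := by
    intro N
    obtain ⟨n, hn1, hn2⟩ := hfreq (N + 1)
    exact ⟨n, lt_of_lt_of_le (Nat.lt_succ_self N) hn1, hn2⟩
  obtain ⟨φ, hφmono, hφ⟩ := extraction_of_frequently_atTop (frequently_atTop'.2 hfreq')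
  have hφtop : Tendsto φ atTop atTop := hφmono.tendsto_atTop
  have hevφ : ∃ᶠ j in atTop, (pn ∘ φ) j ∈ closedBall (0:𝔼) (R + 1) :=
    (hφtop.eventually hev).frequently
  obtain ⟨p, _, θ, hθmono, hθtend⟩ :=
    (isCompact_closedBall (0:𝔼) (R + 1)).tendsto_subseq' hevφ
  set ψ : ℕ → ℕ := fun j => φ (θ j) with hψdef
  have hψtop : Tendsto ψ atTop atTop := (hφmono.comp hθmono).tendsto_atTop
  have hθtend' : Tendsto (fun j => pn (ψ j)) atTop (𝓝 p) := hθtend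
  -- p ∈ A
  have hpA : p ∈ A := by
    have hc1 : Tendsto (fun j => infDist (pn (ψ j)) A) atTop (𝓝 (infDist p A)) :=
      ((continuous_infDist_pt A).tendsto p).comp hθtend'
    have hc2 : Tendsto (fun j => hausdorffDist (An (ψ j)) A) atTop (𝓝 0) :=
      hd.comp hψtop
    have hle : infDist p A ≤ 0 := by
      refine le_of_tendsto_of_tendsto' hc1 hc2 fun j => ?_
      exact infDist_le_hausdorffDist_of_mem (hpn (ψ j)).1 (hEd (ψ j))
    have : infDist p A = 0 := le_antisymm hle infDist_nonneg
    have := (mem_closure_iff_infDist_zero hAne).2 this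
    rwa [hA.isClosed.closure_eq] at this
  -- p maximizes inner ℝ · u on A
  have hpmax : ∀ y ∈ A, (inner ℝ y u : ℝ) ≤ inner ℝ p u := by
    intro y hy
    have hsel : ∀ n, ∃ z ∈ An n, dist y z < hausdorffDist (An n) A + 1 / (n + 1) := by
      intro n
      have h1 : infDist y (An n) ≤ hausdorffDist A (An n) :=
        infDist_le_hausdorffDist_of_mem hy (by rw [EMetric.hausdorffEdist_comm]; exact hEd n)
      have h2 : infDist y (An n) < hausdorffDist (An n) A + 1 / (n + 1) := by
        rw [Metric.hausdorffDist_comm] at h1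
        have : (0:ℝ) < 1 / (n + 1) := by positivity
        linarith
      exact (infDist_lt_iff (hAnne n)).1 h2
    choose z hz1 hz2 using hsel
    have hztend : Tendsto z atTop (𝓝 y) := by
      rw [tendsto_iff_dist_tendsto_zero]
      have hb : Tendsto (fun n : ℕ => hausdorffDist (An n) A + 1 / (n + 1)) atTop (𝓝 0) := by
        have := hd.add tendsto_one_div_add_atTop_nhds_zero_nat
        simpa using this
      refine squeeze_zero (fun n => dist_nonneg) (fun n => ?_) hb
      rw [dist_comm]; exact (hz2 n).le
    have hineq : ∀ j, (inner ℝ (z (ψ j)) (un (ψ j)) : ℝ) ≤ inner ℝ (pn (ψ j)) (un (ψ j)) :=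
      fun j => (hpn (ψ j)).2 _ (hz1 (ψ j))
    have hL : Tendsto (fun j => (inner ℝ (z (ψ j)) (un (ψ j)) : ℝ)) atTop (𝓝 (inner ℝ y u : ℝ)) :=
      Tendsto.inner (hztend.comp hψtop) (hun.comp hψtop)
    have hRt : Tendsto (fun j => (inner ℝ (pn (ψ j)) (un (ψ j)) : ℝ)) atTop (𝓝 (inner ℝ p u : ℝ)) :=
      Tendsto.inner hθtend' (hun.comp hψtop)
    exact le_of_tendsto_of_tendsto' hL hRt hineq
  have hpq : p = q := face_subsingleton hAs hu ⟨hpA, hpmax⟩ hq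
  have hdist0 : Tendsto (fun j => dist (pn (ψ j)) q) atTop (𝓝 0) := by
    rw [← tendsto_iff_dist_tendsto_zero]
    rwa [hpq] at hθtend'
  obtain ⟨j, hj⟩ := (hdist0.eventually (gt_mem_nhds hε)).exists
  exact absurd (hφ (θ j)) (not_le.2 hj)
lemma middleHedgehog_nonempty {A : Set 𝔼} (hc : IsCompact A) (hne : A.Nonempty)
    (hA : StrictConvex ℝ A) : (middleHedgehog A).Nonempty := by
  rw [middleHedgehog_eq hc hne hA]
  exact (NormedSpace.sphere_nonempty.mpr zero_le_one).image _

lemma middleHedgehog_isCompact {A : Set 𝔼} (hc : IsCompact A) (hne : A.Nonempty)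
    (hA : StrictConvex ℝ A) : IsCompact (middleHedgehog A) := by
  apply IsSeqCompact.isCompact
  intro x hx
  have hx' : ∀ j, ∃ u ∈ sphere (0:𝔼) 1, x j = (2⁻¹ : ℝ) • (spt A u + spt A (-u)) := by
    intro j
    have := hx j
    rw [middleHedgehog_eq hc hne hA] at this
    obtain ⟨u, hu, h⟩ := this
    exact ⟨u, hu, h.symm⟩
  choose u hu hxu using hx'
  obtain ⟨uu, huu, θ, hθmono, hθtend⟩ := (isCompact_sphere (0:𝔼) 1).tendsto_subseq hu
  have huu1 : ‖uu‖ = 1 := by simpa using huu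
  have huu0 : uu ≠ 0 := by intro h; rw [h, norm_zero] at huu1; norm_num at huu1
  have hdconst : Tendsto (fun _ : ℕ => hausdorffDist A A) atTop (𝓝 0) := by
    simp only [Metric.hausdorffDist_self_zero]; exact tendsto_const_nhds
  have h1 : Tendsto (fun j => spt A (u (θ j))) atTop (𝓝 (spt A uu)) :=
    supp_tendsto hc hne hA (fun _ => hc) (fun _ => hne) hdconst huu0 hθtend
      (fun j => spt_mem (face_nonempty hc hne _))
      (spt_mem (face_nonempty hc hne _))
  have h2 : Tendsto (fun j => spt A (-(u (θ j)))) atTop (𝓝 (spt A (-uu))) :=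
    supp_tendsto hc hne hA (fun _ => hc) (fun _ => hne) hdconst (neg_ne_zero.2 huu0)
      (hθtend.neg) (fun j => spt_mem (face_nonempty hc hne _))
      (spt_mem (face_nonempty hc hne _))
  refine ⟨(2⁻¹ : ℝ) • (spt A uu + spt A (-uu)), ?_, θ, hθmono, ?_⟩
  · rw [middleHedgehog_eq hc hne hA]
    exact ⟨uu, huu, rfl⟩
  · have : Tendsto (fun j => (2⁻¹ : ℝ) • (spt A (u (θ j)) + spt A (-(u (θ j))))) atTop
        (𝓝 ((2⁻¹ : ℝ) • (spt A uu + spt A (-uu)))) := (h1.add h2).const_smul _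
    refine this.congr fun j => ?_
    simp only [Function.comp_apply, ← hxu (θ j)]

lemma hedge {A : Set 𝔼} (hA : IsCompact A) (hAne : A.Nonempty) (hAs : StrictConvex ℝ A)
    {An : ℕ → Set 𝔼} (hAnc : ∀ n, IsCompact (An n)) (hAnne : ∀ n, (An n).Nonempty)
    (hAns : ∀ n, StrictConvex ℝ (An n))
    (hd : Tendsto (fun n => hausdorffDist (An n) A) atTop (𝓝 0))
    {ε : ℝ} (hε : 0 < ε) :
    ∀ᶠ n in atTop, middleHedgehog A ⊆ thickening ε (middleHedgehog (An n)) ∧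
      middleHedgehog (An n) ⊆ thickening ε (middleHedgehog A) := by
  have key : ∀ᶠ n in atTop, ∀ u : 𝔼, ‖u‖ = 1 →
      dist ((2⁻¹ : ℝ) • (spt (An n) u + spt (An n) (-u)))
        ((2⁻¹ : ℝ) • (spt A u + spt A (-u))) < ε := by
    by_contra hcon
    rw [Filter.not_eventually] at hcon
    have hcon' : ∀ N, ∃ n > N, ∃ u : 𝔼, ‖u‖ = 1 ∧
        ε ≤ dist ((2⁻¹ : ℝ) • (spt (An n) u + spt (An n) (-u)))
          ((2⁻¹ : ℝ) • (spt A u + spt A (-u))) := by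
      intro N
      obtain ⟨n, hn1, hn2⟩ := (frequently_atTop.1 hcon) (N + 1)
      push_neg at hn2
      obtain ⟨u, hu1, hu2⟩ := hn2
      exact ⟨n, lt_of_lt_of_le (Nat.lt_succ_self N) hn1, u, hu1, hu2⟩
    obtain ⟨φ, hφmono, hφ⟩ := extraction_of_frequently_atTop (frequently_atTop'.2 hcon')
    choose u hu1 hu2 using hφ
    have humem : ∀ j, u j ∈ sphere (0:𝔼) 1 := fun j => by simpa using hu1 j
    obtain ⟨uu, huu, θ, hθmono, hθtend⟩ := (isCompact_sphere (0:𝔼) 1).tendsto_subseq humem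
    have huu1 : ‖uu‖ = 1 := by simpa using huu
    have huu0 : uu ≠ 0 := by intro h; rw [h, norm_zero] at huu1; norm_num at huu1
    set ψ : ℕ → ℕ := fun j => φ (θ j) with hψdef
    have hψtop : Tendsto ψ atTop atTop := (hφmono.comp hθmono).tendsto_atTop
    have hdψ : Tendsto (fun j => hausdorffDist (An (ψ j)) A) atTop (𝓝 0) := hd.comp hψtop
    have hdconst : Tendsto (fun _ : ℕ => hausdorffDist A A) atTop (𝓝 0) := by
      simp only [Metric.hausdorffDist_self_zero]; exact tendsto_const_nhds
    have h1 : Tendsto (fun j => spt (An (ψ j)) (u (θ j))) atTop (𝓝 (spt A uu)) :=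
      supp_tendsto hA hAne hAs (fun j => hAnc (ψ j)) (fun j => hAnne (ψ j)) hdψ huu0 hθtend
        (fun j => spt_mem (face_nonempty (hAnc (ψ j)) (hAnne (ψ j)) _))
        (spt_mem (face_nonempty hA hAne _))
    have h2 : Tendsto (fun j => spt (An (ψ j)) (-(u (θ j)))) atTop (𝓝 (spt A (-uu))) :=
      supp_tendsto hA hAne hAs (fun j => hAnc (ψ j)) (fun j => hAnne (ψ j)) hdψ
        (neg_ne_zero.2 huu0) hθtend.neg
        (fun j => spt_mem (face_nonempty (hAnc (ψ j)) (hAnne (ψ j)) _))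
        (spt_mem (face_nonempty hA hAne _))
    have h3 : Tendsto (fun j => spt A (u (θ j))) atTop (𝓝 (spt A uu)) :=
      supp_tendsto hA hAne hAs (fun _ => hA) (fun _ => hAne) hdconst huu0 hθtend
        (fun j => spt_mem (face_nonempty hA hAne _)) (spt_mem (face_nonempty hA hAne _))
    have h4 : Tendsto (fun j => spt A (-(u (θ j)))) atTop (𝓝 (spt A (-uu))) :=
      supp_tendsto hA hAne hAs (fun _ => hA) (fun _ => hAne) hdconst (neg_ne_zero.2 huu0)
        hθtend.neg (fun j => spt_mem (face_nonempty hA hAne _))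
        (spt_mem (face_nonempty hA hAne _))
    have hLn : Tendsto (fun j => (2⁻¹ : ℝ) • (spt (An (ψ j)) (u (θ j)) + spt (An (ψ j)) (-(u (θ j)))))
        atTop (𝓝 ((2⁻¹ : ℝ) • (spt A uu + spt A (-uu)))) := (h1.add h2).const_smul _
    have hL : Tendsto (fun j => (2⁻¹ : ℝ) • (spt A (u (θ j)) + spt A (-(u (θ j)))))
        atTop (𝓝 ((2⁻¹ : ℝ) • (spt A uu + spt A (-uu)))) := (h3.add h4).const_smul _
    have hdist0 : Tendsto (fun j =>
        dist ((2⁻¹ : ℝ) • (spt (An (ψ j)) (u (θ j)) + spt (An (ψ j)) (-(u (θ j)))))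
          ((2⁻¹ : ℝ) • (spt A (u (θ j)) + spt A (-(u (θ j)))))) atTop (𝓝 0) := by
      have := hLn.dist hL
      simpa using this
    obtain ⟨j, hj⟩ := (hdist0.eventually (gt_mem_nhds hε)).exists
    exact absurd (hu2 (θ j)) (not_le.2 hj)
  filter_upwards [key] with n hn
  constructor
  · intro m hm
    rw [middleHedgehog_eq hA hAne hAs] at hm
    obtain ⟨v, hv, rfl⟩ := hm
    have hv1 : ‖v‖ = 1 := by simpa using hv
    rw [mem_thickening_iff]
    refine ⟨(2⁻¹ : ℝ) • (spt (An n) v + spt (An n) (-v)), ?_, ?_⟩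
    · rw [middleHedgehog_eq (hAnc n) (hAnne n) (hAns n)]
      exact ⟨v, hv, rfl⟩
    · rw [dist_comm]; exact hn v hv1
  · intro m hm
    rw [middleHedgehog_eq (hAnc n) (hAnne n) (hAns n)] at hm
    obtain ⟨v, hv, rfl⟩ := hm
    have hv1 : ‖v‖ = 1 := by simpa using hv
    rw [mem_thickening_iff]
    refine ⟨(2⁻¹ : ℝ) • (spt A v + spt A (-v)), ?_, ?_⟩
    · rw [middleHedgehog_eq hA hAne hAs]
      exact ⟨v, hv, rfl⟩
    · exact hn v hv1
lemma exposed_mem {M : Set 𝔼} {e : 𝔼} (he : e ∈ Set.exposedPoints ℝ (convexHull ℝ M)) :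
    e ∈ M := by
  obtain ⟨heconv, l, hl⟩ := he
  by_contra heM
  have hsub : M ⊆ {y : 𝔼 | l y < l e} := by
    intro y hy
    have h1 := hl y (subset_convexHull ℝ M hy)
    rcases lt_or_eq_of_le h1.1 with h | h
    · exact h
    · exact absurd (h1.2 h.ge) (fun hye => heM (hye ▸ hy))
  have hconv : Convex ℝ {y : 𝔼 | l y < l e} :=
    convex_halfSpace_lt ⟨fun a b => l.map_add a b, fun c a => l.map_smul c a⟩ _
  simpa using convexHull_min hsub hconv heconv

lemma convex_halfspace_union_pt {v p : 𝔼} {c : ℝ} (hp : (inner ℝ v p : ℝ) = c) :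
    Convex ℝ {y : 𝔼 | (inner ℝ v y : ℝ) < c ∨ y = p} := by
  intro y₁ h₁ y₂ h₂ a b ha hb hab
  simp only [Set.mem_setOf_eq] at h₁ h₂ ⊢
  have hin : (inner ℝ v (a • y₁ + b • y₂) : ℝ) = a * inner ℝ v y₁ + b * inner ℝ v y₂ := by
    rw [inner_add_right, real_inner_smul_right, real_inner_smul_right]
  rcases eq_or_lt_of_le ha with rfl | ha'
  · have hb1 : b = 1 := by linarith
    simp only [zero_smul, zero_add, hb1, one_smul]
    exact h₂
  rcases eq_or_lt_of_le hb with rfl | hb'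
  · have ha1 : a = 1 := by linarith
    simp only [zero_smul, add_zero, ha1, one_smul]
    exact h₁
  rcases h₁ with h₁ | e₁
  · rcases h₂ with h₂ | e₂
    · left; rw [hin]
      calc a * (inner ℝ v y₁ : ℝ) + b * inner ℝ v y₂ < a * c + b * c :=
            add_lt_add (mul_lt_mul_of_pos_left h₁ ha') (mul_lt_mul_of_pos_left h₂ hb')
        _ = c := by rw [← add_mul, hab, one_mul]
    · left; rw [hin, e₂, hp]
      calc a * (inner ℝ v y₁ : ℝ) + b * c < a * c + b * c :=
            add_lt_add_left (mul_lt_mul_of_pos_left h₁ ha') _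
        _ = c := by rw [← add_mul, hab, one_mul]
  · rcases h₂ with h₂ | e₂
    · left; rw [hin, e₁, hp]
      calc a * c + b * (inner ℝ v y₂ : ℝ) < a * c + b * c :=
            add_lt_add_right (mul_lt_mul_of_pos_left h₂ hb') _
        _ = c := by rw [← add_mul, hab, one_mul]
    · right; rw [e₁, e₂, ← add_smul, hab, one_smul]

lemma strict_sep_exposed {S : Set 𝔼} {v p : 𝔼}
    (hp : p ∈ S) (hstrict : ∀ y ∈ S, (inner ℝ v y : ℝ) ≤ inner ℝ v p ∧
      ((inner ℝ v y : ℝ) = inner ℝ v p → y = p)) :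
    p ∈ Set.exposedPoints ℝ (convexHull ℝ S) := by
  set c : ℝ := inner ℝ v p with hc
  have hSH : S ⊆ {y : 𝔼 | (inner ℝ v y : ℝ) < c ∨ y = p} := by
    intro y hy
    rcases eq_or_lt_of_le (hstrict y hy).1 with h | h
    · exact Or.inr ((hstrict y hy).2 h)
    · exact Or.inl h
  have hhull : convexHull ℝ S ⊆ {y : 𝔼 | (inner ℝ v y : ℝ) < c ∨ y = p} :=
    convexHull_min hSH (convex_halfspace_union_pt rfl)
  refine ⟨subset_convexHull ℝ S hp, innerSL ℝ v, ?_⟩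
  intro y hy
  rcases hhull hy with h | rfl
  · exact ⟨le_of_lt h, fun hle => absurd (lt_of_lt_of_le h hle) (lt_irrefl _)⟩
  · exact ⟨le_refl _, fun _ => rfl⟩

lemma farthest_exposed {S : Set 𝔼} {z p : 𝔼} (hp : p ∈ S)
    (hmax : ∀ y ∈ S, dist y z ≤ dist p z) (hpz : p ≠ z) :
    p ∈ Set.exposedPoints ℝ (convexHull ℝ S) := by
  set v : 𝔼 := p - z with hv
  have hv0 : (0:ℝ) < ‖v‖ := by
    rw [norm_pos_iff]; exact sub_ne_zero.2 hpz
  apply strict_sep_exposed hp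
  intro y hy
  have hyz : ‖y - z‖ ≤ ‖p - z‖ := by
    rw [← dist_eq_norm, ← dist_eq_norm]; exact hmax y hy
  have hkey : (inner ℝ v (y - z) : ℝ) ≤ ‖v‖ * ‖v‖ := by
    calc (inner ℝ v (y - z) : ℝ) ≤ ‖v‖ * ‖y - z‖ := real_inner_le_norm v (y - z)
    _ ≤ ‖v‖ * ‖p - z‖ := by
        apply mul_le_mul_of_nonneg_left hyz (norm_nonneg v)
    _ = ‖v‖ * ‖v‖ := by rw [← hv]
  have hvv : (inner ℝ v v : ℝ) = ‖v‖ * ‖v‖ := real_inner_self_eq_norm_mul_norm v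
  have hiff : (inner ℝ v y : ℝ) - inner ℝ v z = inner ℝ v (y - z) := (inner_sub_right v y z).symm
  have hpiff : (inner ℝ v p : ℝ) - inner ℝ v z = ‖v‖ * ‖v‖ := by
    rw [← hvv, ← inner_sub_right]
  constructor
  · linarith
  · intro heq
    have h1 : (inner ℝ v (y - z) : ℝ) = ‖v‖ * ‖v‖ := by linarith
    have h2 : ‖v‖ * ‖y - z‖ = ‖v‖ * ‖v‖ := by
      have hle : (inner ℝ v (y-z) : ℝ) ≤ ‖v‖ * ‖y - z‖ := real_inner_le_norm v (y - z)
      have : ‖v‖ * ‖y - z‖ ≤ ‖v‖ * ‖v‖ := by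
        rw [hv]; exact mul_le_mul_of_nonneg_left hyz (norm_nonneg v)
      linarith
    have hnorm : ‖y - z‖ = ‖v‖ := by
      have := mul_left_cancel₀ (ne_of_gt hv0) h2
      linarith
    have h3 : (inner ℝ v (y - z) : ℝ) = ‖v‖ * ‖y - z‖ := by rw [hnorm, h1]
    have h4 : ‖y - z‖ • v = ‖v‖ • (y - z) := inner_eq_norm_mul_iff_real.1 h3
    rw [hnorm] at h4
    have h5 : v = y - z := smul_right_injective 𝔼 (ne_of_gt hv0) h4
    have : p - z = y - z := by rw [← hv, h5]
    have := sub_left_injective this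
    exact this.symm
lemma gap_lemma {M : Set 𝔼} (hM : IsCompact M) {e : 𝔼} {l : 𝔼 →L[ℝ] ℝ}
    (hstr : ∀ y ∈ convexHull ℝ M, l y ≤ l e ∧ (l e ≤ l y → y = e)) {ε : ℝ} (hε : 0 < ε) :
    ∃ γ > 0, ∀ y ∈ M, ε ≤ dist y e → l y ≤ l e - γ := by
  set S' : Set 𝔼 := M ∩ {y | ε ≤ dist y e} with hS'
  have hclosed : IsClosed {y : 𝔼 | ε ≤ dist y e} :=
    isClosed_le continuous_const (Continuous.dist continuous_id continuous_const)
  have hS'c : IsCompact S' := hM.inter_right hclosed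
  by_cases hS'ne : S'.Nonempty
  · obtain ⟨y₀, hy₀S, hy₀max⟩ := hS'c.exists_isMaxOn hS'ne l.continuous.continuousOn
    have hy₀M : y₀ ∈ M := hy₀S.1
    have hy₀e : y₀ ≠ e := by
      intro h
      have : ε ≤ dist y₀ e := hy₀S.2
      rw [h, dist_self] at this
      linarith
    have hy₀lt : l y₀ < l e := by
      rcases lt_or_eq_of_le (hstr y₀ (subset_convexHull ℝ M hy₀M)).1 with h | h
      · exact h
      · exact absurd ((hstr y₀ (subset_convexHull ℝ M hy₀M)).2 h.ge) hy₀e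
    refine ⟨l e - l y₀, by linarith, fun y hy hyd => ?_⟩
    have : l y ≤ l y₀ := hy₀max ⟨hy, hyd⟩
    linarith
  · exact ⟨1, one_pos, fun y hy hyd => absurd (⟨y, hy, hyd⟩ : S'.Nonempty) hS'ne⟩

set_option maxHeartbeats 1000000 in
lemma near_exposed {M : Set 𝔼} (hM : IsCompact M) (hMne : M.Nonempty) {e : 𝔼}
    (he : e ∈ Set.exposedPoints ℝ (convexHull ℝ M)) {ε : ℝ} (hε : 0 < ε) :
    ∃ δ > 0, ∀ N : Set 𝔼, IsCompact N → N.Nonempty → M ⊆ thickening δ N →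
      N ⊆ thickening δ M →
      ∃ q ∈ Set.exposedPoints ℝ (convexHull ℝ N), dist q e < ε := by
  obtain ⟨heconv, l, hl⟩ := he
  have heM : e ∈ M := exposed_mem ⟨heconv, l, hl⟩
  set w : 𝔼 := (InnerProductSpace.toDual ℝ 𝔼).symm l with hwdef
  have hw : ∀ x : 𝔼, (inner ℝ w x : ℝ) = l x := fun x => InnerProductSpace.toDual_symm_apply
  by_cases hw0 : w = 0
  · -- degenerate case : M = {e}
    have hMe : ∀ y ∈ M, y = e := by
      intro y hy
      have h1 := hl y (subset_convexHull ℝ M hy)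
      apply h1.2
      have hly : l y = 0 := by rw [← hw y, hw0]; simp
      have hle : l e = 0 := by rw [← hw e, hw0]; simp
      rw [hly, hle]
    refine ⟨ε / 2, by linarith, fun N hN hNne hMN hNM => ?_⟩
    set w₀ : 𝔼 := EuclideanSpace.single (0 : Fin 2) (1 : ℝ) with hw₀def
    have hw₀ : ‖w₀‖ = 1 := by rw [hw₀def, EuclideanSpace.norm_single]; norm_num
    set z : 𝔼 := e + ε • w₀ with hzdef
    have hez : dist e z = ε := by
      have h0 : e - (e + ε • w₀) = -(ε • w₀) := by abel
      rw [hzdef, dist_eq_norm, h0, norm_neg, norm_smul, hw₀, Real.norm_eq_abs,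
        abs_of_pos hε, mul_one]
    have hcont : ContinuousOn (fun y : 𝔼 => dist y z) N :=
      (Continuous.dist continuous_id continuous_const).continuousOn
    obtain ⟨q, hqN, hqmax⟩ := hN.exists_isMaxOn hNne hcont
    have hqmax' : ∀ y ∈ N, dist y z ≤ dist q z := fun y hy => hqmax hy
    have hqe : dist q e < ε / 2 := by
      obtain ⟨y, hyM, hqy⟩ := mem_thickening_iff.1 (hNM hqN)
      rwa [hMe y hyM] at hqy
    have hqz : q ≠ z := by
      intro h
      have : dist q e = ε := by rw [h, dist_comm, hez]
      linarith
    refine ⟨q, farthest_exposed hqN hqmax' hqz, by linarith⟩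
  · -- main case
    obtain ⟨ρ₀, hρ₀⟩ := hM.isBounded.subset_closedBall e
    set ρ : ℝ := max ρ₀ 0 with hρdef
    have hρnn : 0 ≤ ρ := le_max_right _ _
    have hρ : M ⊆ closedBall e ρ := hρ₀.trans (closedBall_subset_closedBall (le_max_left _ _))
    obtain ⟨γ, hγ, hgap⟩ := gap_lemma hM hl (half_pos hε)
    set t : ℝ := (ρ ^ 2 + 2) / γ with htdef
    have ht : 0 < t := by positivity
    have htγ : t * γ = ρ ^ 2 + 2 := by
      rw [htdef]; field_simp
    have hwpos : (0:ℝ) < ‖w‖ := norm_pos_iff.2 hw0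
    set s : ℝ := t * ‖w‖ with hsdef
    have hs : 0 < s := mul_pos ht hwpos
    set δ : ℝ := min (ε / 2) (min (1 / (4 * s + 1)) (s / 2)) with hδdef
    have hδ : 0 < δ := by
      apply lt_min (half_pos hε)
      apply lt_min _ (half_pos hs)
      positivity
    have hδε : δ ≤ ε / 2 := min_le_left _ _
    have hδ1 : δ * (4 * s + 1) ≤ 1 := by
      have h1 : δ ≤ 1 / (4 * s + 1) := le_trans (min_le_right _ _) (min_le_left _ _)
      rw [div_eq_mul_inv, one_mul] at h1
      calc δ * (4 * s + 1) ≤ (4 * s + 1)⁻¹ * (4 * s + 1) :=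
            mul_le_mul_of_nonneg_right h1 (by positivity)
        _ = 1 := by field_simp
    have hδs : δ ≤ s / 2 := le_trans (min_le_right _ _) (min_le_right _ _)
    set z : 𝔼 := e - t • w with hzdef
    have hez : dist e z = s := by
      rw [hzdef, dist_eq_norm, sub_sub_cancel, norm_smul, Real.norm_eq_abs, abs_of_pos ht]
    clear_value w ρ t s δ z
    refine ⟨δ, hδ, fun N hN hNne hMN hNM => ?_⟩
    have hcont : ContinuousOn (fun y : 𝔼 => dist y z) N :=
      (Continuous.dist continuous_id continuous_const).continuousOn
    obtain ⟨q, hqN, hqmax⟩ := hN.exists_isMaxOn hNne hcont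
    have hqmax' : ∀ y ∈ N, dist y z ≤ dist q z := fun y hy => hqmax hy
    obtain ⟨e', he'N, he'd⟩ := mem_thickening_iff.1 (hMN heM)
    have hqz_lb : s - δ ≤ dist q z := by
      have h1 : dist e' z ≥ dist e z - dist e e' := by
        linarith [dist_triangle e e' z]
      have h2 : dist q z ≥ dist e' z := hqmax' e' he'N
      rw [hez] at h1
      linarith
    have hqz : q ≠ z := by
      intro h
      rw [h, dist_self] at hqz_lb
      linarith
    refine ⟨q, farthest_exposed hqN hqmax' hqz, ?_⟩
    by_contra hfar
    push_neg at hfar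
    obtain ⟨y, hyM, hqy⟩ := mem_thickening_iff.1 (hNM hqN)
    have hye : ε / 2 ≤ dist y e := by
      have := dist_triangle q y e
      have h2 := dist_triangle y q e  -- dist y e ≥ dist q e - dist q y
      have h3 : dist q e ≤ dist q y + dist y e := dist_triangle q y e
      linarith
    have hly : l y ≤ l e - γ := hgap y hyM hye
    -- expand ‖y - z‖²
    have hyz : y - z = (y - e) + t • w := by
      rw [hzdef]; abel
    have hBsq : dist y z ^ 2 = ‖y - e‖ ^ 2 + 2 * (t * (inner ℝ w (y - e) : ℝ)) + s ^ 2 := by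
      rw [dist_eq_norm, hyz, norm_add_sq_real]
      have h1 : (inner ℝ (y - e) (t • w) : ℝ) = t * inner ℝ w (y - e) := by
        rw [real_inner_smul_right, real_inner_comm]
      have h2 : ‖t • w‖ = s := by
        rw [norm_smul, Real.norm_eq_abs, abs_of_pos ht, hsdef]
      rw [h1, h2]
    have hinner : (inner ℝ w (y - e) : ℝ) ≤ -γ := by
      rw [inner_sub_right, hw y, hw e]
      linarith
    have hnye : ‖y - e‖ ≤ ρ := by
      have := hρ hyM
      rwa [mem_closedBall, dist_eq_norm] at this
    have hB2 : dist y z ^ 2 ≤ s ^ 2 - ρ ^ 2 - 4 := by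
      have h1 : ‖y - e‖ ^ 2 ≤ ρ ^ 2 := by nlinarith [norm_nonneg (y - e)]
      have h2 : 2 * (t * (inner ℝ w (y - e) : ℝ)) ≤ 2 * (t * (-γ)) := by
        apply mul_le_mul_of_nonneg_left _ (by norm_num : (0:ℝ) ≤ 2)
        exact mul_le_mul_of_nonneg_left hinner ht.le
      rw [hBsq] at *
      nlinarith [htγ]
    have hA_ub : dist q z ≤ dist y z + δ := by
      have := dist_triangle q y z
      linarith [hqy]
    -- contradiction
    have hB0 : 0 ≤ dist y z := dist_nonneg
    have hsB : s - 2 * δ ≤ dist y z := by linarith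
    have hs2δ : 0 ≤ s - 2 * δ := by linarith
    have hsq : (s - 2 * δ) ^ 2 ≤ dist y z ^ 2 := by
      have := pow_le_pow_left₀ hs2δ hsB 2
      exact this
    have hexp : (s - 2 * δ) ^ 2 = s ^ 2 - 4 * (s * δ) + 4 * δ ^ 2 := by ring
    have hδ1' : 4 * (s * δ) + δ ≤ 1 := by nlinarith [hδ1]
    nlinarith [sq_nonneg ρ, sq_nonneg δ, hsq, hexp, hB2, hδ1', hδ]
/-- The space of strictly convex planar bodies with the Hausdorff metric. -/
def StrictBody : Type :=
  {K : ConvexBody (EuclideanSpace ℝ (Fin 2)) //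
    (interior (K : Set (EuclideanSpace ℝ (Fin 2)))).Nonempty ∧
    StrictConvex ℝ (K : Set (EuclideanSpace ℝ (Fin 2)))}

noncomputable instance : MetricSpace StrictBody :=
  Subtype.metricSpace

/-- For each `k`, the set of strictly convex bodies whose middle hedgehog's convex hull
has at most `k` exposed points is closed. -/
theorem Ak_closed (k : ℕ) :
    IsClosed {K : StrictBody |
      (Set.exposedPoints ℝ
        (convexHull ℝ (middleHedgehog (K.1 : Set (EuclideanSpace ℝ (Fin 2)))))).Finite ∧
      (Set.exposedPoints ℝ
        (convexHull ℝ (middleHedgehog (K.1 : Set (EuclideanSpace ℝ (Fin 2)))))).ncard ≤ k} := by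
  apply IsSeqClosed.isClosed
  intro Kn K hmem hlim
  classical
  simp only [Set.mem_setOf_eq] at hmem ⊢
  set A : Set 𝔼 := (K.1 : Set 𝔼) with hAdef
  have hA : IsCompact A := K.1.isCompact
  have hAne : A.Nonempty := K.1.nonempty
  have hAs : StrictConvex ℝ A := K.2.2
  set An : ℕ → Set 𝔼 := fun n => ((Kn n).1 : Set 𝔼) with hAndef
  have hAnc : ∀ n, IsCompact (An n) := fun n => (Kn n).1.isCompact
  have hAnne : ∀ n, (An n).Nonempty := fun n => (Kn n).1.nonempty
  have hAns : ∀ n, StrictConvex ℝ (An n) := fun n => (Kn n).2.2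
  have hdist : Tendsto (fun n => dist (Kn n) K) atTop (𝓝 0) :=
    tendsto_iff_dist_tendsto_zero.1 hlim
  have hdeq : ∀ n, hausdorffDist (An n) A = dist (Kn n) K := by
    intro n
    rfl
  have hd : Tendsto (fun n => hausdorffDist (An n) A) atTop (𝓝 0) :=
    hdist.congr fun n => (hdeq n).symm
  set M : Set 𝔼 := middleHedgehog A with hMdef
  have hMc : IsCompact M := middleHedgehog_isCompact hA hAne hAs
  have hMne : M.Nonempty := middleHedgehog_nonempty hA hAne hAs
  by_contra hcon
  have hT : ∃ T : Set 𝔼, T ⊆ Set.exposedPoints ℝ (convexHull ℝ M) ∧ T.Finite ∧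
      T.ncard = k + 1 := by
    by_cases hfin : (Set.exposedPoints ℝ (convexHull ℝ M)).Finite
    · have hnc : ¬(Set.exposedPoints ℝ (convexHull ℝ M)).ncard ≤ k := fun h => hcon ⟨hfin, h⟩
      obtain ⟨T, hT1, hT2⟩ :=
        Set.exists_subset_card_eq (Nat.succ_le_of_lt (lt_of_not_ge hnc))
      exact ⟨T, hT1, hfin.subset hT1, hT2⟩
    · obtain ⟨T, hT1, hT2, hT3⟩ := Set.Infinite.exists_subset_ncard_eq hfin (k+1)
      exact ⟨T, hT1, hT2, hT3⟩
  obtain ⟨T, hTsub, hTfin, hTcard⟩ := hT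
  obtain ⟨C, hC0, hCle⟩ := Set.einfsep_pos.1 hTfin.einfsep_pos
  set ε : ℝ := (min C 1).toReal / 3 with hεdef
  have hmintop : min C 1 ≠ ⊤ := (lt_of_le_of_lt (min_le_right _ _) ENNReal.one_lt_top).ne
  have hε : 0 < ε := by
    apply div_pos _ (by norm_num : (0:ℝ) < 3)
    exact ENNReal.toReal_pos (lt_min hC0 zero_lt_one).ne' hmintop
  have hsep : ∀ e₁ ∈ T, ∀ e₂ ∈ T, e₁ ≠ e₂ → 3 * ε ≤ dist e₁ e₂ := by
    intro e₁ h₁ e₂ h₂ hne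
    have h3 : (3:ℝ) * ε = (min C 1).toReal := by rw [hεdef]; ring
    rw [h3, dist_edist]
    exact ENNReal.toReal_mono (edist_ne_top e₁ e₂)
      (le_trans (min_le_left _ _) (hCle e₁ h₁ e₂ h₂ hne))
  have hev : ∀ e ∈ T, ∀ᶠ n in atTop,
      ∃ q ∈ Set.exposedPoints ℝ (convexHull ℝ (middleHedgehog (An n))), dist q e < ε := by
    intro e heT
    obtain ⟨δ, hδ, hprop⟩ := near_exposed hMc hMne (hTsub heT) hε
    filter_upwards [hedge hA hAne hAs hAnc hAnne hAns hd hδ] with n hn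
    exact hprop (middleHedgehog (An n)) (middleHedgehog_isCompact (hAnc n) (hAnne n) (hAns n))
      (middleHedgehog_nonempty (hAnc n) (hAnne n) (hAns n)) hn.1 hn.2
  obtain ⟨n, hn⟩ := (hTfin.eventually_all.2 hev).exists
  set S : Set 𝔼 := Set.exposedPoints ℝ (convexHull ℝ (middleHedgehog (An n))) with hSdef
  have hSfin : S.Finite := (hmem n).1
  have hSk : S.ncard ≤ k := (hmem n).2
  have hchoice : ∀ e ∈ T, ∃ q, q ∈ S ∧ dist q e < ε := by
    intro e he
    obtain ⟨q, hq1, hq2⟩ := hn e he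
    exact ⟨q, hq1, hq2⟩
  choose! f hf1 hf2 using hchoice
  have hinj : Set.InjOn f T := by
    intro e₁ h₁ e₂ h₂ hfe
    by_contra hne
    have hs3 := hsep e₁ h₁ e₂ h₂ hne
    have d1 := hf2 e₁ h₁
    have d2 := hf2 e₂ h₂
    have htr : dist e₁ e₂ ≤ dist e₁ (f e₁) + dist (f e₂) e₂ := by
      rw [hfe]
      exact dist_triangle _ _ _
    rw [dist_comm e₁ (f e₁)] at htr
    linarith
  have himg : f '' T ⊆ S := by
    rintro q ⟨e, he, rfl⟩
    exact hf1 e he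
  have hcard : (f '' T).ncard = k + 1 := by
    rw [Set.ncard_image_of_injOn hinj, hTcard]
  have hle : (f '' T).ncard ≤ S.ncard := Set.ncard_le_ncard himg hSfin
  omega
end
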